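/- Let u : ℝᵈ → ℝ be convex and differentiable, with quadratic cost c(x,y) = (1/2)‖x - y‖². Then for any measurable map S with the same push-forward as T = ∇u (i.e., T_#ν = S_#ν for a probability measure ν with density on ℝᵈ), one has ∫ (1/2)‖x - ∇u(x)‖² dν(x) ≤ ∫ (1/2)‖x - S(x)‖² dν(x). -/

import Mathlib

open MeasureTheory

private lemma toReal_sub_helper (a b : ℝ) :
    (ENNReal.ofReal (b - a)).toReal - (ENNReal.ofReal (a - b)).toReal = b - a := by
  rcases le_total a b with h | h
  · rw [ENNReal.toReal_ofReal (by linarith), ENNReal.ofReal_of_nonpos (by linarith)]; simp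
  · rw [ENNReal.ofReal_of_nonpos (by linarith), ENNReal.toReal_ofReal (by linarith)]; simp

private lemma toReal_add_helper (a b : ℝ) :
    (ENNReal.ofReal (b - a)).toReal + (ENNReal.ofReal (a - b)).toReal = |b - a| := by
  rcases le_total a b with h | h
  · rw [ENNReal.toReal_ofReal (by linarith), ENNReal.ofReal_of_nonpos (by linarith),
      abs_of_nonneg (by linarith)]; simp
  · rw [ENNReal.ofReal_of_nonpos (by linarith), ENNReal.toReal_ofReal (by linarith),
      abs_of_nonpos (by linarith)]; simp

lemma key_layer {Ω : Type*} [MeasurableSpace Ω] (μ : Measure Ω) [IsProbabilityMeasure μ]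
    {A D : Ω → ℝ} (hA : Measurable A) (hDm : Measurable D) (hD : Integrable D μ)
    (h : ∀ t : ℝ, μ {ω | t < A ω} ≤ μ {ω | t < A ω + D ω}) :
    0 ≤ ∫ ω, D ω ∂μ := by
  classical
  set f : Ω → ℝ → ℝ := fun ω t =>
    Set.indicator {p : ℝ | p < A ω + D ω} 1 t - Set.indicator {p : ℝ | p < A ω} 1 t with hf
  have hind : ∀ a b : ℝ, Integrable (Set.indicator (Set.Ico a b) (1 : ℝ → ℝ)) volume :=
    fun a b => (integrable_indicator_iff measurableSet_Ico).2
      ((integrableOn_const_iff (C := (1:ℝ))).2 (Or.inr measure_Ico_lt_top))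
  have halt : ∀ ω t, f ω t =
      Set.indicator (Set.Ico (A ω) (A ω + D ω)) 1 t
        - Set.indicator (Set.Ico (A ω + D ω) (A ω)) 1 t := by
    intro ω t
    simp only [hf, Set.indicator, Set.mem_Ico, Set.mem_setOf_eq, Pi.one_apply]
    rcases lt_or_ge t (A ω) with h1 | h1 <;> rcases lt_or_ge t (A ω + D ω) with h2 | h2 <;>
      split_ifs <;> simp_all <;> linarith
  have hnorm : ∀ ω t, ‖f ω t‖ =
      Set.indicator (Set.Ico (A ω) (A ω + D ω)) 1 t
        + Set.indicator (Set.Ico (A ω + D ω) (A ω)) 1 t := by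
    intro ω t
    rw [halt]
    simp only [Set.indicator, Set.mem_Ico, Pi.one_apply, Real.norm_eq_abs]
    split_ifs <;> simp_all <;> linarith
  have hmeas : AEStronglyMeasurable (Function.uncurry f) (μ.prod volume) := by
    apply Measurable.aestronglyMeasurable
    apply Measurable.sub <;>
      exact measurable_one.indicator (measurableSet_lt measurable_snd (by fun_prop))
  have hinner : ∀ ω, ∫ t, f ω t = D ω := by
    intro ω
    rw [show (fun t => f ω t) = fun t =>
        Set.indicator (Set.Ico (A ω) (A ω + D ω)) 1 t
          - Set.indicator (Set.Ico (A ω + D ω) (A ω)) 1 t from funext (halt ω),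
      integral_sub (hind _ _) (hind _ _), integral_indicator_one measurableSet_Ico,
      integral_indicator_one measurableSet_Ico, measureReal_def, measureReal_def, Real.volume_Ico, Real.volume_Ico]
    rw [toReal_sub_helper]; ring
  have hint : Integrable (Function.uncurry f) (μ.prod volume) := by
    rw [integrable_prod_iff hmeas]
    constructor
    · refine Filter.Eventually.of_forall fun ω => ?_
      rw [show (fun t => Function.uncurry f (ω, t)) = fun t =>
          Set.indicator (Set.Ico (A ω) (A ω + D ω)) 1 t
            - Set.indicator (Set.Ico (A ω + D ω) (A ω)) 1 t from funext (halt ω)]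
      exact (hind _ _).sub (hind _ _)
    · apply (hD.abs).congr
      refine Filter.Eventually.of_forall fun ω => ?_
      show |D ω| = ∫ t, ‖f ω t‖
      rw [show (fun t => ‖f ω t‖) = fun t =>
          Set.indicator (Set.Ico (A ω) (A ω + D ω)) 1 t
            + Set.indicator (Set.Ico (A ω + D ω) (A ω)) 1 t from funext (hnorm ω),
        integral_add (hind _ _) (hind _ _), integral_indicator_one measurableSet_Ico,
        integral_indicator_one measurableSet_Ico, measureReal_def, measureReal_def, Real.volume_Ico, Real.volume_Ico,
        toReal_add_helper]
      congr 1; ring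
  have hswap := integral_integral_swap hint
  have hDint : ∫ ω, D ω ∂μ = ∫ t, (∫ ω, f ω t ∂μ) := by
    rw [← hswap]
    exact integral_congr_ae (Filter.Eventually.of_forall fun ω => (hinner ω).symm)
  rw [hDint]
  refine integral_nonneg fun t => ?_
  show (0:ℝ) ≤ ∫ ω, f ω t ∂μ
  have hs1 : MeasurableSet {ω | t < A ω + D ω} := measurableSet_lt measurable_const (hA.add hDm)
  have hs2 : MeasurableSet {ω | t < A ω} := measurableSet_lt measurable_const hA
  have h1 : Integrable (fun ω => Set.indicator {p : ℝ | p < A ω + D ω} (1 : ℝ → ℝ) t) μ := by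
    apply Integrable.congr ((integrable_const (1:ℝ)).indicator hs1)
    refine Filter.Eventually.of_forall fun ω => ?_
    simp [Set.indicator, Set.mem_setOf_eq]
  have h2 : Integrable (fun ω => Set.indicator {p : ℝ | p < A ω} (1 : ℝ → ℝ) t) μ := by
    apply Integrable.congr ((integrable_const (1:ℝ)).indicator hs2)
    refine Filter.Eventually.of_forall fun ω => ?_
    simp [Set.indicator, Set.mem_setOf_eq]
  have hcalc : ∫ ω, f ω t ∂μ = (μ {ω | t < A ω + D ω}).toReal - (μ {ω | t < A ω}).toReal := by
    rw [show (fun ω => f ω t) = fun ω =>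
        Set.indicator {p : ℝ | p < A ω + D ω} (1 : ℝ → ℝ) t
          - Set.indicator {p : ℝ | p < A ω} (1 : ℝ → ℝ) t from rfl,
      integral_sub h1 h2]
    congr 1
    · rw [show (fun ω => Set.indicator {p : ℝ | p < A ω + D ω} (1 : ℝ → ℝ) t)
          = fun ω => Set.indicator {ω | t < A ω + D ω} (1 : Ω → ℝ) ω from
        funext fun ω => by simp [Set.indicator, Set.mem_setOf_eq]]
      exact integral_indicator_one hs1
    · rw [show (fun ω => Set.indicator {p : ℝ | p < A ω} (1 : ℝ → ℝ) t)
          = fun ω => Set.indicator {ω | t < A ω} (1 : Ω → ℝ) ω from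
        funext fun ω => by simp [Set.indicator, Set.mem_setOf_eq]]
      exact integral_indicator_one hs2
  rw [hcalc, sub_nonneg]
  exact (ENNReal.toReal_le_toReal (measure_lt_top μ _).ne (measure_lt_top μ _).ne).mpr (h t)

lemma grad_ineq {E : Type*} [NormedAddCommGroup E] [InnerProductSpace ℝ E] [CompleteSpace E]
    {u : E → ℝ} (hc : ConvexOn ℝ Set.univ u) (hd : Differentiable ℝ u) (x z : E) :
    u x + inner ℝ (gradient u x) (z - x) ≤ u z := by
  have hline : HasDerivAt (fun t : ℝ => x + t • (z - x)) (z - x) 0 := by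
    simpa using ((hasDerivAt_id (0:ℝ)).smul_const (z - x)).const_add x
  have hx0 : x + (0:ℝ) • (z - x) = x := by simp
  have hphi : HasDerivAt (fun t : ℝ => u (x + t • (z - x)))
      (inner ℝ (gradient u x) (z - x) : ℝ) 0 := by
    have h1 : HasFDerivAt u ((InnerProductSpace.toDual ℝ E) (gradient u x))
        (x + (0:ℝ) • (z - x)) := by
      rw [hx0]; exact (hd x).hasGradientAt.hasFDerivAt
    have := h1.comp_hasDerivAt 0 hline
    simpa only [Function.comp_def, InnerProductSpace.toDual_apply_apply] using this
  have hcvx1 : ConvexOn ℝ Set.univ (fun t : ℝ => u (x + t • (z - x))) := by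
    have := hc.comp_affineMap (AffineMap.lineMap x z : ℝ →ᵃ[ℝ] E)
    simp only [Set.preimage_univ] at this
    have heq : (fun t : ℝ => u (x + t • (z - x))) = u ∘ (AffineMap.lineMap x z) :=
      funext fun t => congrArg u (by rw [AffineMap.lineMap_apply_module]; module)
    rw [heq]; exact this
  have := hcvx1.le_slope_of_hasDerivAt (Set.mem_univ (0:ℝ)) (Set.mem_univ (1:ℝ)) one_pos hphi
  simp [slope_def_field, hx0] at this
  have hg : inner ℝ (gradient u x) (z - x) = fderiv ℝ u x z - fderiv ℝ u x x := by simp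
  linarith

/-- Brenier: the gradient of a convex function is optimal for the quadratic cost
among all maps with the same push-forward. -/
theorem gradient_of_convex_is_optimal
    {d : ℕ} (u : EuclideanSpace ℝ (Fin d) → ℝ)
    (hu_cvx : ConvexOn ℝ Set.univ u) (hu_diff : Differentiable ℝ u)
    (ν : Measure (EuclideanSpace ℝ (Fin d))) [IsProbabilityMeasure ν]
    (hac : ν ≪ volume)
    (S : EuclideanSpace ℝ (Fin d) → EuclideanSpace ℝ (Fin d))
    (hS : AEMeasurable S ν)
    (hpush : Measure.map (fun x => gradient u x) ν = Measure.map S ν)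
    (hIT : Integrable (fun x => (1/2) * ‖x - gradient u x‖ ^ 2) ν)
    (hIS : Integrable (fun x => (1/2) * ‖x - S x‖ ^ 2) ν) :
    ∫ x, (1/2) * ‖x - gradient u x‖ ^ 2 ∂ν ≤ ∫ x, (1/2) * ‖x - S x‖ ^ 2 ∂ν := by
  classical
  set T : EuclideanSpace ℝ (Fin d) → EuclideanSpace ℝ (Fin d) :=
    fun x => gradient u x with hTdef
  have hu_cont : Continuous u := hu_diff.continuous
  have hTm : Measurable T :=
    ((InnerProductSpace.toDual ℝ (EuclideanSpace ℝ (Fin d))).symm.continuous.measurable).comp (measurable_fderiv ℝ u)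
  -- measurable version of S
  set S' : EuclideanSpace ℝ (Fin d) → EuclideanSpace ℝ (Fin d) := hS.mk S with hS'def
  have hS'm : Measurable S' := hS.measurable_mk
  have hSS' : S =ᵐ[ν] S' := hS.ae_eq_mk
  have hpush' : Measure.map T ν = Measure.map S' ν := hpush.trans (Measure.map_congr hSS')
  -- dense sequence
  obtain ⟨e, he⟩ := TopologicalSpace.exists_dense_seq (EuclideanSpace ℝ (Fin d))
  -- the (shifted) Legendre-type potential
  set g : EuclideanSpace ℝ (Fin d) → EReal :=
    fun y => ⨆ n, (((inner ℝ (e n) y : ℝ) - u (e n) - (1/2) * ‖y‖^2 : ℝ) : EReal) with hgdef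
  have hgm : Measurable g := by
    refine Measurable.iSup fun n => Continuous.measurable ?_
    rw [EReal.continuous_coe_iff]
    exact ((continuous_const.inner continuous_id).sub continuous_const).sub
      (continuous_const.mul (continuous_norm.pow 2))
  have hG1 : ∀ x y : EuclideanSpace ℝ (Fin d), (((inner ℝ x y : ℝ) - u x - (1/2) * ‖y‖^2 : ℝ) : EReal) ≤ g y := by
    intro x y
    have hc : Continuous fun z : EuclideanSpace ℝ (Fin d) =>
        ((((inner ℝ z y : ℝ) - u z - (1/2) * ‖y‖^2 : ℝ)) : EReal) := by
      rw [EReal.continuous_coe_iff]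
      exact ((continuous_id.inner continuous_const).sub hu_cont).sub continuous_const
    have hcl : IsClosed {z : EuclideanSpace ℝ (Fin d) |
        (((inner ℝ z y : ℝ) - u z - (1/2) * ‖y‖^2 : ℝ) : EReal) ≤ g y} :=
      isClosed_le hc continuous_const
    have hsub : Set.range e ⊆ {z : EuclideanSpace ℝ (Fin d) |
        (((inner ℝ z y : ℝ) - u z - (1/2) * ‖y‖^2 : ℝ) : EReal) ≤ g y} := by
      rintro _ ⟨n, rfl⟩
      exact le_iSup (fun n => (((inner ℝ (e n) y : ℝ) - u (e n) - (1/2) * ‖y‖^2 : ℝ) : EReal)) n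
    have : closure (Set.range e) ⊆ _ := closure_minimal hsub hcl
    rw [he.closure_range] at this
    exact this (Set.mem_univ x)
  have hG2 : ∀ x : EuclideanSpace ℝ (Fin d),
      g (T x) ≤ (((inner ℝ x (T x) : ℝ) - u x - (1/2) * ‖T x‖^2 : ℝ) : EReal) := by
    intro x
    refine iSup_le fun n => ?_
    rw [EReal.coe_le_coe_iff]
    have h := grad_ineq hu_cvx hu_diff x (e n)
    have h2 : (inner ℝ (gradient u x) (e n - x) : ℝ)
        = (inner ℝ (e n) (T x) : ℝ) - (inner ℝ x (T x) : ℝ) := by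
      rw [inner_sub_right, real_inner_comm (e n) (T x), real_inner_comm x (T x)]
    rw [h2] at h
    linarith
  have hgnebot : ∀ y : EuclideanSpace ℝ (Fin d), g y ≠ ⊥ :=
    fun y => (lt_of_lt_of_le (EReal.bot_lt_coe _) (hG1 0 y)).ne'
  have hgTnetop : ∀ x : EuclideanSpace ℝ (Fin d), g (T x) ≠ ⊤ :=
    fun x => (lt_of_le_of_lt (hG2 x) (EReal.coe_lt_top _)).ne
  -- g ∘ S' is a.e. finite
  have htopset : MeasurableSet {y : EuclideanSpace ℝ (Fin d) | g y = ⊤} := hgm (measurableSet_singleton ⊤)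
  have h0 : ν {x | g (S' x) = ⊤} = 0 := by
    have h1 : ν {x | g (S' x) = ⊤} = (Measure.map S' ν) {y | g y = ⊤} :=
      (Measure.map_apply hS'm htopset).symm
    rw [h1, ← hpush', Measure.map_apply hTm htopset]
    convert measure_empty
    · exact Set.eq_empty_iff_forall_notMem.2 fun x hx => hgTnetop x hx
    · infer_instance
  have hae_top : ∀ᵐ x ∂ν, g (S' x) ≠ ⊤ := by
    rw [ae_iff]
    simpa using h0
  set A : EuclideanSpace ℝ (Fin d) → ℝ := fun x => (g (S' x)).toReal with hAdef
  set Df : EuclideanSpace ℝ (Fin d) → ℝ := fun x => (1/2) * ‖x - S' x‖^2 - (1/2) * ‖x - T x‖^2 with hDdef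
  have hAm : Measurable A := measurable_ereal_toReal.comp (hgm.comp hS'm)
  have hDm : Measurable Df := by fun_prop
  have hIT' : Integrable (fun x => (1/2) * ‖x - T x‖^2) ν := hIT
  have hIS' : Integrable (fun x => (1/2) * ‖x - S' x‖^2) ν :=
    hIS.congr (hSS'.mono fun x hx => by simp only [hx])
  have hDint : Integrable Df ν := hIS'.sub hIT'
  -- the key distributional inequality
  have hkey : ∀ t : ℝ, ν {x | t < A x} ≤ ν {x | t < A x + Df x} := by
    intro t
    have e1 : ν {x | t < A x} = ν {x | (t : EReal) < g (S' x)} := by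
      apply measure_congr
      refine hae_top.mono fun x hx => ?_
      have hco : ((g (S' x)).toReal : EReal) = g (S' x) := EReal.coe_toReal hx (hgnebot _)
      show (t < A x) = ((t : EReal) < g (S' x))
      rw [eq_iff_iff, show A x = (g (S' x)).toReal from rfl, ← hco, EReal.coe_lt_coe_iff, EReal.toReal_coe]
    have hset : MeasurableSet {y : EuclideanSpace ℝ (Fin d) | (t : EReal) < g y} :=
      measurableSet_lt measurable_const hgm
    have e2 : ν {x | (t : EReal) < g (S' x)} = ν {x | (t : EReal) < g (T x)} := by
      rw [show {x | (t : EReal) < g (S' x)} = S' ⁻¹' {y | (t : EReal) < g y} from rfl,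
        ← Measure.map_apply hS'm hset, ← hpush', Measure.map_apply hTm hset]
      rfl
    have e3 : {x : EuclideanSpace ℝ (Fin d) | (t : EReal) < g (T x)} ⊆
        {x : EuclideanSpace ℝ (Fin d) | t < (inner ℝ x (T x) : ℝ) - u x - (1/2) * ‖T x‖^2} := by
      intro x hx
      have := lt_of_lt_of_le hx (hG2 x)
      rwa [EReal.coe_lt_coe_iff] at this
    have e4 : {x : EuclideanSpace ℝ (Fin d) | t < (inner ℝ x (T x) : ℝ) - u x - (1/2) * ‖T x‖^2}
        ≤ᵐ[ν] {x | t < A x + Df x} := by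
      refine hae_top.mono fun x hx hmem => ?_
      have hA1 : (inner ℝ x (S' x) : ℝ) - u x - (1/2) * ‖S' x‖^2 ≤ A x := by
        have := hG1 x (S' x)
        have hco : ((g (S' x)).toReal : EReal) = g (S' x) := EReal.coe_toReal hx (hgnebot _)
        rw [← hco, EReal.coe_le_coe_iff] at this
        exact this
      have hid1 : ‖x - T x‖^2 = ‖x‖^2 - 2 * (inner ℝ x (T x) : ℝ) + ‖T x‖^2 :=
        norm_sub_sq_real x (T x)
      have hid2 : ‖x - S' x‖^2 = ‖x‖^2 - 2 * (inner ℝ x (S' x) : ℝ) + ‖S' x‖^2 :=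
        norm_sub_sq_real x (S' x)
      have hmem' : t < (inner ℝ x (T x) : ℝ) - u x - (1/2) * ‖T x‖^2 := hmem
      show t < A x + ((1:ℝ)/2 * ‖x - S' x‖^2 - 1/2 * ‖x - T x‖^2)
      nlinarith [hA1, hid1, hid2]
    calc ν {x | t < A x} = ν {x | (t : EReal) < g (S' x)} := e1
      _ = ν {x | (t : EReal) < g (T x)} := e2
      _ ≤ ν {x : EuclideanSpace ℝ (Fin d) | t < (inner ℝ x (T x) : ℝ) - u x - (1/2) * ‖T x‖^2} := measure_mono e3
      _ ≤ ν {x | t < A x + Df x} := measure_mono_ae e4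
  have hfinal := key_layer ν hAm hDm hDint hkey
  have hsplit : ∫ x, Df x ∂ν
      = ∫ x, (1/2) * ‖x - S' x‖^2 ∂ν - ∫ x, (1/2) * ‖x - T x‖^2 ∂ν :=
    integral_sub hIS' hIT'
  have hcongr : ∫ x, (1/2) * ‖x - S' x‖^2 ∂ν = ∫ x, (1/2) * ‖x - S x‖^2 ∂ν :=
    integral_congr_ae (hSS'.mono fun x hx => by simp only [hx])
  rw [hsplit, hcongr] at hfinal
  linarith
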